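/- Let K, J ∈ L¹(ℝᴺ) be nonnegative radially symmetric functions whose radial profiles are nonincreasing. Then K * J is radially symmetric with nonincreasing radial profile. -/

import Mathlib

open MeasureTheory Real Set Filter
open scoped ENNReal

private lemma enn_rearrange {A B C D : ℝ≥0∞} (hBA : B ≤ A) (hCD : C ≤ D) :
    A * C + B * D ≤ B * C + A * D := by
  calc A * C + B * D = (A - B) * C + (B * C + B * D) := by
        rw [← add_assoc, ← add_mul, tsub_add_cancel_of_le hBA]
    _ ≤ (A - B) * D + (B * C + B * D) := by gcongr
    _ = B * C + ((A - B) * D + B * D) := by ring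
    _ = B * C + A * D := by rw [← add_mul, tsub_add_cancel_of_le hBA]

private lemma lintegral_eq_half (h : ℝ → ℝ≥0∞) (hm : Measurable h) :
    ∫⁻ w, h w = ∫⁻ w in Set.Ioi (0:ℝ), (h w + h (-w)) := by
  have h1 : (∫⁻ w in Set.Ioi (0:ℝ), h w) + (∫⁻ w in Set.Iic (0:ℝ), h w) = ∫⁻ w, h w := by
    simpa [Set.compl_Ioi] using lintegral_add_compl h (measurableSet_Ioi (a := (0:ℝ)))
  have h2 : ∫⁻ w in Set.Iic (0:ℝ), h w = ∫⁻ w in Set.Iio (0:ℝ), h w :=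
    (setLIntegral_congr (Iio_ae_eq_Iic (a := (0:ℝ)))).symm
  have h3 : ∫⁻ w in Set.Ioi (0:ℝ), h (-w) = ∫⁻ w in Set.Iio (0:ℝ), h w := by
    have := (Measure.measurePreserving_neg (volume : Measure ℝ)).setLIntegral_comp_emb
      (MeasurableEquiv.neg ℝ).measurableEmbedding h (Set.Ioi 0)
    simpa [Set.image_neg_eq_neg, Set.neg_Ioi] using this
  rw [lintegral_add_left hm, h3, ← h2, h1]

private lemma even_anti {f : ℝ → ℝ≥0∞} (hfe : ∀ w, f (-w) = f w)
    (hfa : ∀ u v : ℝ, 0 ≤ u → u ≤ v → f v ≤ f u)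
    {r w : ℝ} (hr : 0 ≤ r) (hw : 0 ≤ w) : f (r + w) ≤ f (r - w) := by
  rcases le_total w r with h | h
  · exact hfa (r - w) (r + w) (by linarith) (by linarith)
  · have : f (r - w) = f (w - r) := by rw [← hfe (w - r)]; ring_nf
    rw [this]
    exact hfa (w - r) (r + w) (by linarith) (by linarith)

private lemma oned (f g : ℝ → ℝ≥0∞) (hf : Measurable f) (hg : Measurable g)
    (hfe : ∀ w, f (-w) = f w) (hge : ∀ w, g (-w) = g w)
    (hfa : ∀ u v : ℝ, 0 ≤ u → u ≤ v → f v ≤ f u)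
    (hga : ∀ u v : ℝ, 0 ≤ u → u ≤ v → g v ≤ g u)
    {s t : ℝ} (hs : 0 ≤ s) (hst : s ≤ t) :
    ∫⁻ u, f (t - u) * g u ≤ ∫⁻ u, f (s - u) * g u := by
  set m := (s + t) / 2 with hmdef
  set d := (t - s) / 2 with hddef
  have hd0 : 0 ≤ d := by rw [hddef]; linarith
  have hm0 : 0 ≤ m := by rw [hmdef]; linarith
  have hL : ∫⁻ u, f (t - u) * g u = ∫⁻ w, f (d - w) * g (w + m) := by
    rw [← lintegral_add_right_eq_self (fun u => f (t - u) * g u) m]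
    refine lintegral_congr fun w => ?_
    have : t - (w + m) = d - w := by rw [hddef, hmdef]; ring
    rw [this]
  have hR : ∫⁻ u, f (s - u) * g u = ∫⁻ w, f (d + w) * g (w + m) := by
    rw [← lintegral_add_right_eq_self (fun u => f (s - u) * g u) m]
    refine lintegral_congr fun w => ?_
    have h1 : s - (w + m) = -(d + w) := by rw [hddef, hmdef]; ring
    rw [h1, hfe]
  rw [hL, hR]
  have hmf : Measurable fun w => f (d - w) * g (w + m) :=
    ((hf.comp (measurable_const.sub measurable_id)).mul
      (hg.comp (measurable_id.add_const m)))
  have hmf2 : Measurable fun w => f (d + w) * g (w + m) :=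
    ((hf.comp (measurable_const.add measurable_id)).mul
      (hg.comp (measurable_id.add_const m)))
  rw [lintegral_eq_half _ hmf, lintegral_eq_half _ hmf2]
  refine setLIntegral_mono (hmf2.add (hmf2.comp measurable_neg)) fun w hw => ?_
  have hw0 : (0:ℝ) ≤ w := le_of_lt hw
  simp only [sub_neg_eq_add, neg_add_eq_sub]
  have e1 : d - -w = d + w := by ring
  have e2 : d + -w = d - w := by ring
  have e3 : -w + m = m - w := by ring
  have e4 : w + m = m + w := by ring
  rw [e2, e4]
  exact enn_rearrange (even_anti hfe hfa hd0 hw0) (even_anti hge hga hm0 hw0)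

noncomputable def Teqv (n : ℕ) : (ℝ × (Fin n → ℝ)) ≃ᵐ EuclideanSpace ℝ (Fin (n+1)) :=
  (MeasurableEquiv.piFinSuccAbove (fun _ => ℝ) 0).symm.trans
    (MeasurableEquiv.toLp 2 (Fin (n+1) → ℝ))

lemma Teqv_mp (n : ℕ) : MeasurePreserving (Teqv n) volume volume := by
  have h1 : MeasurePreserving ((MeasurableEquiv.piFinSuccAbove (fun _ : Fin (n+1) => ℝ) 0).symm)
      volume volume := by
    have := (volume_preserving_piFinSuccAbove (fun _ : Fin (n+1) => ℝ) 0).symm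
    simpa [Measure.volume_eq_prod] using this
  have h2 : MeasurePreserving ((MeasurableEquiv.toLp 2 (Fin (n+1) → ℝ)))
      volume volume := EuclideanSpace.volume_preserving_symm_measurableEquiv_toLp (Fin (n+1)) |>.symm
  exact h2.comp h1

lemma Teqv_apply_zero (n : ℕ) (u : ℝ) (z : Fin n → ℝ) : (Teqv n (u, z)) 0 = u := by
  simp [Teqv, MeasurableEquiv.piFinSuccAbove, MeasurableEquiv.coe_toLp]

lemma Teqv_apply_succ (n : ℕ) (u : ℝ) (z : Fin n → ℝ) (j : Fin n) :
    (Teqv n (u, z)) j.succ = z j := by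
  simp [Teqv, MeasurableEquiv.piFinSuccAbove, MeasurableEquiv.coe_toLp]

lemma Teqv_norm (n : ℕ) (u : ℝ) (z : Fin n → ℝ) :
    ‖Teqv n (u, z)‖ = Real.sqrt (u ^ 2 + ∑ j, z j ^ 2) := by
  rw [EuclideanSpace.norm_eq]
  congr 1
  rw [Fin.sum_univ_succ]
  simp [Teqv_apply_zero, Teqv_apply_succ, Real.norm_eq_abs, sq_abs]

lemma Teqv_sub (n : ℕ) (r u : ℝ) (z : Fin n → ℝ) :
    (r • EuclideanSpace.single (0 : Fin (n+1)) (1:ℝ)) - Teqv n (u, z) = Teqv n (r - u, -z) := by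
  ext j
  induction j using Fin.cases with
  | zero => simp [Teqv_apply_zero, EuclideanSpace.single_apply]
  | succ i => simp [Teqv_apply_succ, EuclideanSpace.single_apply, Fin.succ_ne_zero]

private lemma hcongr_aux {n : ℕ} (Φ Ψ : ℝ → ℝ≥0∞) (r : ℝ) : ∀ p : ℝ × (Fin n → ℝ),
    Φ ‖(r • EuclideanSpace.single (0 : Fin (n+1)) (1:ℝ)) - Teqv n p‖ * Ψ ‖Teqv n p‖
    = Φ (Real.sqrt ((r - p.1) ^ 2 + ∑ j, p.2 j ^ 2))
      * Ψ (Real.sqrt (p.1 ^ 2 + ∑ j, p.2 j ^ 2)) := by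
  rintro ⟨u, z⟩
  rw [Teqv_sub, Teqv_norm, Teqv_norm]
  simp

private lemma hrep {n : ℕ} (Φ Ψ : ℝ → ℝ≥0∞) (hΦ : Measurable Φ) (hΨ : Measurable Ψ) (r : ℝ) :
    ∫⁻ y : EuclideanSpace ℝ (Fin (n+1)),
      Φ ‖(r • EuclideanSpace.single (0 : Fin (n+1)) (1:ℝ)) - y‖ * Ψ ‖y‖
      = ∫⁻ z : Fin n → ℝ, ∫⁻ u : ℝ,
          Φ (Real.sqrt ((r - u) ^ 2 + ∑ j, z j ^ 2)) * Ψ (Real.sqrt (u ^ 2 + ∑ j, z j ^ 2)) := by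
  rw [← (Teqv_mp n).lintegral_comp_emb (Teqv n).measurableEmbedding]
  rw [lintegral_congr (hcongr_aux Φ Ψ r)]
  have hsum : Measurable fun p : ℝ × (Fin n → ℝ) => ∑ j, p.2 j ^ 2 :=
    (Finset.measurable_sum Finset.univ fun j _ =>
      ((measurable_pi_apply j).comp measurable_snd).pow_const 2)
  have hmeas : Measurable fun p : ℝ × (Fin n → ℝ) =>
      Φ (Real.sqrt ((r - p.1) ^ 2 + ∑ j, p.2 j ^ 2))
        * Ψ (Real.sqrt (p.1 ^ 2 + ∑ j, p.2 j ^ 2)) :=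
    ((hΦ.comp ((((measurable_const.sub measurable_fst).pow_const 2).add hsum).sqrt))).mul
      (hΨ.comp (((measurable_fst.pow_const 2).add hsum).sqrt))
  rw [Measure.volume_eq_prod, lintegral_prod_symm _ hmeas.aemeasurable]

private lemma oned2 (Φ Ψ : ℝ → ℝ≥0∞) (hΦ : Measurable Φ) (hΨ : Measurable Ψ)
    (hΦa : Antitone Φ) (hΨa : Antitone Ψ) (a : ℝ)
    {s t : ℝ} (hs : 0 ≤ s) (hst : s ≤ t) :
    (∫⁻ u, Φ (Real.sqrt ((t - u) ^ 2 + a)) * Ψ (Real.sqrt (u ^ 2 + a))) ≤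
      ∫⁻ u, Φ (Real.sqrt ((s - u) ^ 2 + a)) * Ψ (Real.sqrt (u ^ 2 + a)) := by
  have heven : ∀ w : ℝ, Real.sqrt ((-w) ^ 2 + a) = Real.sqrt (w ^ 2 + a) := by
    intro w; rw [neg_pow]; ring_nf
  have hanti : ∀ (F : ℝ → ℝ≥0∞), Antitone F → ∀ u v : ℝ, 0 ≤ u → u ≤ v →
      F (Real.sqrt (v ^ 2 + a)) ≤ F (Real.sqrt (u ^ 2 + a)) := by
    intro F hF u v hu huv
    exact hF (Real.sqrt_le_sqrt (by nlinarith))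
  exact oned (fun w => Φ (Real.sqrt (w ^ 2 + a)))
    (fun w => Ψ (Real.sqrt (w ^ 2 + a)))
    (hΦ.comp (((measurable_id.pow_const 2).add_const _).sqrt))
    (hΨ.comp (((measurable_id.pow_const 2).add_const _).sqrt))
    (fun w => by simp only [heven]) (fun w => by simp only [heven])
    (hanti Φ hΦa) (hanti Ψ hΨa) hs hst

private lemma key_mono {n : ℕ} (Φ Ψ : ℝ → ℝ≥0∞) (hΦ : Measurable Φ) (hΨ : Measurable Ψ)
    (hΦa : Antitone Φ) (hΨa : Antitone Ψ) {s t : ℝ} (hs : 0 ≤ s) (hst : s ≤ t) :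
    ∫⁻ y : EuclideanSpace ℝ (Fin (n+1)),
        Φ ‖(t • EuclideanSpace.single (0 : Fin (n+1)) (1:ℝ)) - y‖ * Ψ ‖y‖ ≤
    ∫⁻ y : EuclideanSpace ℝ (Fin (n+1)),
        Φ ‖(s • EuclideanSpace.single (0 : Fin (n+1)) (1:ℝ)) - y‖ * Ψ ‖y‖ := by
  rw [hrep Φ Ψ hΦ hΨ t, hrep Φ Ψ hΦ hΨ s]
  exact lintegral_mono fun z => oned2 Φ Ψ hΦ hΨ hΦa hΨa _ hs hst

private lemma rot {N : ℕ} (Φ Ψ : ℝ → ℝ≥0∞) {x x' : EuclideanSpace ℝ (Fin N)} (h : ‖x‖ = ‖x'‖) :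
    ∫⁻ y, Φ ‖x - y‖ * Ψ ‖y‖ = ∫⁻ y, Φ ‖x' - y‖ * Ψ ‖y‖ := by
  let e : EuclideanSpace ℝ (Fin N) ≃ₗᵢ[ℝ] EuclideanSpace ℝ (Fin N) :=
    Submodule.reflection (ℝ ∙ (x' - x))ᗮ
  have hex : e x' = x := Submodule.reflection_sub h.symm
  have hmp : MeasurePreserving e volume volume := e.measurePreserving
  have h1 : ∫⁻ y, Φ ‖x - y‖ * Ψ ‖y‖ = ∫⁻ y, Φ ‖x - e y‖ * Ψ ‖e y‖ :=
    (hmp.lintegral_comp_emb (e.toHomeomorph.measurableEmbedding)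
      (fun y => Φ ‖x - y‖ * Ψ ‖y‖)).symm
  rw [h1]
  refine lintegral_congr fun y => ?_
  rw [← hex, ← map_sub, e.norm_map, e.norm_map]

/-- If `K, J ∈ L¹(ℝᴺ)` are nonnegative radially symmetric functions with
nonincreasing radial profiles, then `K * J` is radially symmetric with a nonincreasing
radial profile. -/
theorem stmt4 {N : ℕ} (K J : EuclideanSpace ℝ (Fin N) → ℝ)
    (hKint : Integrable K) (hJint : Integrable J)
    (φK φJ : ℝ → ℝ)
    (hφK : ∀ x, K x = φK ‖x‖) (hφJ : ∀ x, J x = φJ ‖x‖)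
    (hφKpos : ∀ r ∈ Set.Ici (0:ℝ), 0 ≤ φK r) (hφJpos : ∀ r ∈ Set.Ici (0:ℝ), 0 ≤ φJ r)
    (hφKmono : AntitoneOn φK (Set.Ici 0)) (hφJmono : AntitoneOn φJ (Set.Ici 0)) :
    ∃ φ : ℝ → ℝ, AntitoneOn φ (Set.Ici 0) ∧
      ∀ x, (∫ y, K (x - y) * J y) = φ ‖x‖ := by
  cases N with
  | zero =>
    refine ⟨fun _ => ∫ y, K (0 - y) * J y, fun a _ b _ _ => le_rfl, fun x => ?_⟩
    have hx : x = 0 := Subsingleton.elim x 0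
    rw [hx]
  | succ n =>
    -- nonnegativity and measurability
    have hKnn : ∀ z, 0 ≤ K z := fun z => (hφK z) ▸ hφKpos _ (norm_nonneg z)
    have hJnn : ∀ z, 0 ≤ J z := fun z => (hφJ z) ▸ hφJpos _ (norm_nonneg z)
    have hKanti : Antitone fun r => φK (max r 0) := fun a b hab =>
      hφKmono (le_max_right a 0) (le_max_right b 0) (max_le_max hab le_rfl)
    have hJanti : Antitone fun r => φJ (max r 0) := fun a b hab =>
      hφJmono (le_max_right a 0) (le_max_right b 0) (max_le_max hab le_rfl)
    have hKeq : ∀ z : EuclideanSpace ℝ (Fin (n+1)), K z = φK (max ‖z‖ 0) := fun z => by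
      rw [hφK z, max_eq_left (norm_nonneg z)]
    have hJeq : ∀ z : EuclideanSpace ℝ (Fin (n+1)), J z = φJ (max ‖z‖ 0) := fun z => by
      rw [hφJ z, max_eq_left (norm_nonneg z)]
    have hKm : Measurable K := by
      have : K = (fun r => φK (max r 0)) ∘ fun z => ‖z‖ := funext fun z => hKeq z
      rw [this]; exact hKanti.measurable.comp measurable_norm
    have hJm : Measurable J := by
      have : J = (fun r => φJ (max r 0)) ∘ fun z => ‖z‖ := funext fun z => hJeq z
      rw [this]; exact hJanti.measurable.comp measurable_norm
    set Φ : ℝ → ℝ≥0∞ := fun r => ENNReal.ofReal (φK (max r 0)) with hΦdef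
    set Ψ : ℝ → ℝ≥0∞ := fun r => ENNReal.ofReal (φJ (max r 0)) with hΨdef
    have hΦa : Antitone Φ := fun a b hab => ENNReal.ofReal_le_ofReal (hKanti hab)
    have hΨa : Antitone Ψ := fun a b hab => ENNReal.ofReal_le_ofReal (hJanti hab)
    have hΦm : Measurable Φ := hKanti.measurable.ennreal_ofReal
    have hΨm : Measurable Ψ := hJanti.measurable.ennreal_ofReal
    have hKof : ∀ z : EuclideanSpace ℝ (Fin (n+1)), ENNReal.ofReal (K z) = Φ ‖z‖ := fun z => by
      rw [hKeq z]
    have hJof : ∀ z : EuclideanSpace ℝ (Fin (n+1)), ENNReal.ofReal (J z) = Ψ ‖z‖ := fun z => by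
      rw [hJeq z]
    -- finiteness
    have hfin : ∀ x : EuclideanSpace ℝ (Fin (n+1)), (∫⁻ y, Φ ‖x - y‖ * Ψ ‖y‖) ≠ ⊤ := by
      intro x
      have hb : (∫⁻ y, Φ ‖x - y‖ * Ψ ‖y‖) ≤ ENNReal.ofReal (φK 0) * ∫⁻ y : EuclideanSpace ℝ (Fin (n+1)), Ψ ‖y‖ := by
        have hΨnorm : Measurable fun y : EuclideanSpace ℝ (Fin (n+1)) => Ψ ‖y‖ :=
          hΨm.comp measurable_norm
        rw [← lintegral_const_mul _ hΨnorm]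
        refine lintegral_mono fun y => ?_
        refine mul_le_mul_left ?_ _
        calc Φ ‖x - y‖ = ENNReal.ofReal (φK (max ‖x - y‖ 0)) := rfl
          _ ≤ ENNReal.ofReal (φK (max 0 0)) :=
              ENNReal.ofReal_le_ofReal (hKanti (norm_nonneg _))
          _ = ENNReal.ofReal (φK 0) := by rw [max_self]
      refine ne_top_of_le_ne_top ?_ hb
      refine ENNReal.mul_ne_top ENNReal.ofReal_ne_top ?_
      have hc : (∫⁻ y : EuclideanSpace ℝ (Fin (n+1)), Ψ ‖y‖) = ∫⁻ y : EuclideanSpace ℝ (Fin (n+1)), (‖J y‖₊ : ℝ≥0∞) :=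
        lintegral_congr fun y => by rw [← hJof y, ← Real.enorm_eq_ofReal (hJnn y), enorm_eq_nnnorm]
      rw [hc]; exact hJint.2.ne
    have hreal : ∀ x : EuclideanSpace ℝ (Fin (n+1)),
        (∫ y, K (x - y) * J y) = (∫⁻ y, Φ ‖x - y‖ * Ψ ‖y‖).toReal := by
      intro x
      have hmeas : AEStronglyMeasurable (fun y : EuclideanSpace ℝ (Fin (n+1)) =>
          K (x - y) * J y) volume :=
        ((hKm.comp (measurable_const.sub measurable_id)).mul hJm).aestronglyMeasurable
      rw [integral_eq_lintegral_of_nonneg_ae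
        (Filter.Eventually.of_forall fun y => mul_nonneg (hKnn _) (hJnn _)) hmeas]
      congr 1
      refine lintegral_congr fun y => ?_
      rw [ENNReal.ofReal_mul (hKnn _), hKof, hJof]
    refine ⟨fun r => (∫⁻ y, Φ ‖((max r 0 : ℝ) •
        EuclideanSpace.single (0 : Fin (n+1)) (1:ℝ)) - y‖ * Ψ ‖y‖).toReal, ?_, ?_⟩
    · intro a ha b hb hab
      exact ENNReal.toReal_mono (hfin _)
        (key_mono Φ Ψ hΦm hΨm hΦa hΨa (le_max_right a 0) (max_le_max hab le_rfl))
    · intro x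
      rw [hreal x]
      congr 1
      refine rot Φ Ψ ?_
      rw [norm_smul, EuclideanSpace.norm_single, norm_one, mul_one, Real.norm_eq_abs,
        abs_of_nonneg (le_max_right _ _), max_eq_left (norm_nonneg x)]
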